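/- arXiv:1005.0888 — 3 statements merged into one kernel-verified Lean document; each statement's English description precedes it below -/
import Mathlib

section
/- Let η ∈ ℂ and let λ₁, λ₂, λ₃ ∈ ℂ satisfy sinh(λᵢ−λⱼ+η) ≠ 0 for all 1 ≤ i < j ≤ 3. Then on (ℂ²)^{⊗3} the symmetric R-matrix satisfies the Yang–Baxter equation R₁₂(λ₁−λ₂) R₁₃(λ₁−λ₃) R₂₃(λ₂−λ₃) = R₂₃(λ₂−λ₃) R₁₃(λ₁−λ₃) R₁₂(λ₁−λ₂). -/
open Matrix Complex Finset Filter

noncomputable section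

abbrev M4 : Type := Matrix (Fin 2 × Fin 2) (Fin 2 × Fin 2) ℂ

/-- `b(u) = sinh u / sinh (u + η)` -/
def bC (η u : ℂ) : ℂ := Complex.sinh u / Complex.sinh (u + η)

/-- `c(u) = sinh η / sinh (u + η)` -/
def cC (η u : ℂ) : ℂ := Complex.sinh η / Complex.sinh (u + η)

/-- `c⁺(u) = e^u sinh η / sinh (u + η)` -/
def cP (η u : ℂ) : ℂ := Complex.exp u * Complex.sinh η / Complex.sinh (u + η)

/-- `c⁻(u) = e^{-u} sinh η / sinh (u + η)` -/
def cM (η u : ℂ) : ℂ := Complex.exp (-u) * Complex.sinh η / Complex.sinh (u + η)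

/-- The symmetric R-matrix on `ℂ² ⊗ ℂ²`. -/
def Rsym (η u : ℂ) : M4 := Matrix.of fun a b =>
  if a = b then (if a.1 = a.2 then 1 else bC η u)
  else if a.1 = b.2 ∧ a.2 = b.1 then cC η u else 0

/-- The asymmetric R-matrix `R⁺` on `ℂ² ⊗ ℂ²`. -/
def Rplus (η u : ℂ) : M4 := Matrix.of fun a b =>
  if a = b then (if a.1 = a.2 then 1 else bC η u)
  else if a.1 = b.2 ∧ a.2 = b.1 then (if a.1 = 1 then cP η u else cM η u) else 0

/-- The asymmetric R-matrix `R⁻` on `ℂ² ⊗ ℂ²`, obtained from `R⁺`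
by interchanging `c⁺` and `c⁻`. -/
def Rminus (η u : ℂ) : M4 := Matrix.of fun a b =>
  if a = b then (if a.1 = a.2 then 1 else bC η u)
  else if a.1 = b.2 ∧ a.2 = b.1 then (if a.1 = 1 then cM η u else cP η u) else 0

/-- `emb2 N j k X` is the operator `X_{jk}` on `(ℂ²)^{⊗N}`, acting as `X` on
tensor factors `j` and `k` and as the identity elsewhere. -/
def emb2 (N : ℕ) (j k : Fin N) (X : M4) :
    Matrix (Fin N → Fin 2) (Fin N → Fin 2) ℂ :=
  Matrix.of fun a b => X (a j, a k) (b j, b k) *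
    ∏ i : Fin N, if i = j ∨ i = k then 1 else (if a i = b i then 1 else 0)



private lemma sinh_div_form (x : ℂ) :
    Complex.sinh x = (Complex.exp x * Complex.exp x - 1) / (2 * Complex.exp x) := by
  have h : Complex.sinh x = (Complex.exp x - Complex.exp (-x)) / 2 := rfl
  rw [h, Complex.exp_neg,
    div_eq_div_iff two_ne_zero (by simp [Complex.exp_ne_zero] : (2:ℂ) * Complex.exp x ≠ 0)]
  field_simp [Complex.exp_ne_zero]

private lemma key1 (η u w : ℂ) :
    Complex.sinh (u+η) * Complex.sinh (w+η)
      = Complex.sinh u * Complex.sinh w + Complex.sinh η * Complex.sinh (u+w+η) := by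
  simp only [sinh_div_form, Complex.exp_add, div_mul_div_comm]
  rw [div_add_div _ _ (by simp [Complex.exp_ne_zero]) (by simp [Complex.exp_ne_zero]),
    div_eq_div_iff (by simp [Complex.exp_ne_zero]) (by simp [Complex.exp_ne_zero])]
  ring

private lemma key2 (η u w : ℂ) :
    Complex.sinh w * Complex.sinh (u+w+η) + Complex.sinh u * Complex.sinh η
      = Complex.sinh (u+w) * Complex.sinh (w+η) := by
  simp only [sinh_div_form, Complex.exp_add, div_mul_div_comm]
  rw [div_add_div _ _ (by simp [Complex.exp_ne_zero]) (by simp [Complex.exp_ne_zero]),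
    div_eq_div_iff (by simp [Complex.exp_ne_zero]) (by simp [Complex.exp_ne_zero])]
  ring

private lemma key3 (η u w : ℂ) :
    Complex.sinh u * Complex.sinh (u+w+η) + Complex.sinh η * Complex.sinh w
      = Complex.sinh (u+w) * Complex.sinh (u+η) := by
  simp only [sinh_div_form, Complex.exp_add, div_mul_div_comm]
  rw [div_add_div _ _ (by simp [Complex.exp_ne_zero]) (by simp [Complex.exp_ne_zero]),
    div_eq_div_iff (by simp [Complex.exp_ne_zero]) (by simp [Complex.exp_ne_zero])]
  ring

private lemma scalar1 (η lam1 lam2 lam3 : ℂ)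
    (h12 : Complex.sinh (lam1 - lam2 + η) ≠ 0)
    (h13 : Complex.sinh (lam1 - lam3 + η) ≠ 0)
    (h23 : Complex.sinh (lam2 - lam3 + η) ≠ 0) :
    cC η (lam1 - lam2) * bC η (lam2 - lam3) + bC η (lam1 - lam2) * cC η (lam1 - lam3) * cC η (lam2 - lam3)
      = bC η (lam1 - lam3) * cC η (lam1 - lam2) := by
  have k := key2 η (lam1 - lam2) (lam2 - lam3)
  rw [show lam1 - lam2 + (lam2 - lam3) = lam1 - lam3 from by ring] at k
  simp only [bC, cC]
  field_simp
  linear_combination (Complex.sinh η) * k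

private lemma scalar2 (η lam1 lam2 lam3 : ℂ)
    (h12 : Complex.sinh (lam1 - lam2 + η) ≠ 0)
    (h13 : Complex.sinh (lam1 - lam3 + η) ≠ 0)
    (h23 : Complex.sinh (lam2 - lam3 + η) ≠ 0) :
    bC η (lam1 - lam2) * cC η (lam2 - lam3) + cC η (lam1 - lam2) * cC η (lam1 - lam3) * bC η (lam2 - lam3)
      = cC η (lam2 - lam3) * bC η (lam1 - lam3) := by
  have k := key3 η (lam1 - lam2) (lam2 - lam3)
  rw [show lam1 - lam2 + (lam2 - lam3) = lam1 - lam3 from by ring] at k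
  simp only [bC, cC]
  field_simp
  linear_combination (Complex.sinh η) * k

private lemma scalar3 (η lam1 lam2 lam3 : ℂ)
    (h12 : Complex.sinh (lam1 - lam2 + η) ≠ 0)
    (h13 : Complex.sinh (lam1 - lam3 + η) ≠ 0)
    (h23 : Complex.sinh (lam2 - lam3 + η) ≠ 0) :
    cC η (lam1 - lam2) * cC η (lam2 - lam3) + bC η (lam1 - lam2) * cC η (lam1 - lam3) * bC η (lam2 - lam3)
      = cC η (lam1 - lam3) := by
  have k := key1 η (lam1 - lam2) (lam2 - lam3)
  rw [show lam1 - lam2 + (lam2 - lam3) = lam1 - lam3 from by ring] at k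
  simp only [bC, cC]
  field_simp
  linear_combination (-Complex.sinh η) * k

set_option maxHeartbeats 4000000 in
/-- Yang–Baxter equation for the symmetric R-matrix on `(ℂ²)^{⊗3}`. -/
theorem statement0 (η lam1 lam2 lam3 : ℂ)
    (h12 : Complex.sinh (lam1 - lam2 + η) ≠ 0)
    (h13 : Complex.sinh (lam1 - lam3 + η) ≠ 0)
    (h23 : Complex.sinh (lam2 - lam3 + η) ≠ 0) :
    emb2 3 0 1 (Rsym η (lam1 - lam2)) * emb2 3 0 2 (Rsym η (lam1 - lam3)) *
        emb2 3 1 2 (Rsym η (lam2 - lam3)) =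
      emb2 3 1 2 (Rsym η (lam2 - lam3)) * emb2 3 0 2 (Rsym η (lam1 - lam3)) *
        emb2 3 0 1 (Rsym η (lam1 - lam2)) := by
  have s1 := scalar1 η lam1 lam2 lam3 h12 h13 h23
  have s2 := scalar2 η lam1 lam2 lam3 h12 h13 h23
  have s3 := scalar3 η lam1 lam2 lam3 h12 h13 h23
  apply (Matrix.reindex (finFunctionFinEquiv.trans (finCongr (by norm_num : 2^3 = 8)))
    (finFunctionFinEquiv.trans (finCongr (by norm_num : 2^3 = 8)))).injective
  rw [Matrix.reindex_apply, Matrix.reindex_apply]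
  rw [← Matrix.submatrix_mul_equiv _ _ _ (finFunctionFinEquiv.trans (finCongr (by norm_num : 2^3 = 8))).symm,
      ← Matrix.submatrix_mul_equiv _ _ _ (finFunctionFinEquiv.trans (finCongr (by norm_num : 2^3 = 8))).symm,
      ← Matrix.submatrix_mul_equiv _ _ _ (finFunctionFinEquiv.trans (finCongr (by norm_num : 2^3 = 8))).symm,
      ← Matrix.submatrix_mul_equiv _ _ _ (finFunctionFinEquiv.trans (finCongr (by norm_num : 2^3 = 8))).symm]
  ext i j
  fin_cases i <;> fin_cases j <;>
    simp (config := { decide := true }) only [Matrix.mul_apply, Fin.sum_univ_eight, emb2, Rsym,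
      Fin.prod_univ_three, Matrix.submatrix_apply, Matrix.of_apply, if_true, if_false,
      mul_one, one_mul, mul_zero, zero_mul, add_zero, zero_add]
  all_goals first
    | ring1
    | linear_combination s1
    | linear_combination -s1
    | linear_combination s2
    | linear_combination -s2
    | linear_combination s3
    | linear_combination -s3
end
end

section
/- Let η ∈ ℂ and let λ₁, λ₂, λ₃ ∈ ℂ satisfy sinh(λᵢ−λⱼ+η) ≠ 0 for all 1 ≤ i < j ≤ 3. Then on (ℂ²)^{⊗3} the asymmetric R-matrices satisfy the Yang–Baxter equation R^±₁₂(λ₁−λ₂) R^±₁₃(λ₁−λ₃) R^±₂₃(λ₂−λ₃) = R^±₂₃(λ₂−λ₃) R^±₁₃(λ₁−λ₃) R^±₁₂(λ₁−λ₂), for both choices of sign. -/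
open Matrix Complex Finset Filter

noncomputable section

/- ### Auxiliary lemmas -/

lemma sum8' (f : (Fin 3 → Fin 2) → ℂ) :
    ∑ x, f x = f ![0,0,0] + (f ![0,0,1] + (f ![0,1,0] + (f ![0,1,1]
      + (f ![1,0,0] + (f ![1,0,1] + (f ![1,1,0] + f ![1,1,1])))))) := by
  rw [show (univ : Finset (Fin 3 → Fin 2)) =
    {![0,0,0], ![0,0,1], ![0,1,0], ![0,1,1], ![1,0,0], ![1,0,1], ![1,1,0], ![1,1,1]} by decide]
  rw [Finset.sum_insert (by decide), Finset.sum_insert (by decide), Finset.sum_insert (by decide),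
    Finset.sum_insert (by decide), Finset.sum_insert (by decide), Finset.sum_insert (by decide),
    Finset.sum_insert (by decide), Finset.sum_singleton]

lemma Kid (x y η : ℂ) : sinh x * sinh (y + η) = sinh (x + η) * sinh y + sinh η * sinh (x - y) := by
  simp only [Complex.sinh_add, Complex.sinh_sub]; ring

lemma Kid2 (x y η : ℂ) :
    sinh (x + η) * sinh (y + η) = sinh x * sinh y + sinh η * sinh (x + y + η) := by
  simp only [Complex.sinh_add, Complex.cosh_add]
  linear_combination (sinh x * sinh y) * (Complex.cosh_sq_sub_sinh_sq η)

section YB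
variable (η u v : ℂ) (hu : sinh (u+η) ≠ 0) (hv : sinh (v+η) ≠ 0) (hw : sinh (u+v+η) ≠ 0)

include hu hv hw

lemma YB1 : bC η u * cP η (u+v) * cM η v + cP η u * bC η v = bC η (u+v) * cP η u := by
  have hK : sinh (u+v) * sinh (v + η) = sinh (u+v+η) * sinh v + sinh η * sinh u := by
    have := Kid (u+v) v η; rw [show u + v - v = u by ring] at this; linear_combination this
  have hE : cexp (u+v) * cexp (-v) = cexp u := by rw [← Complex.exp_add]; ring_nf
  simp only [bC, cP, cM]; field_simp
  linear_combination sinh η^2 * sinh u * hE - sinh η * cexp u * hK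

lemma YB2 : cM η u * bC η (u+v) = bC η v * cM η u + cP η v * cM η (u+v) * bC η u := by
  have hK : sinh (u+v) * sinh (v + η) = sinh (u+v+η) * sinh v + sinh η * sinh u := by
    have := Kid (u+v) v η; rw [show u + v - v = u by ring] at this; linear_combination this
  have hE : cexp v * cexp (-v + -u) = cexp (-u) := by rw [← Complex.exp_add]; ring_nf
  simp only [bC, cP, cM]; field_simp
  rw [show -(u+v) = -v + -u by ring]
  linear_combination sinh η * cexp (-u) * hK - sinh η^2 * sinh u * hE

lemma YB3 : cM η u * cP η (u+v) * bC η v + bC η u * cP η v = cP η v * bC η (u+v) := by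
  have hK : sinh (u+v) * sinh (u + η) = sinh (u+v+η) * sinh u + sinh η * sinh v := by
    have := Kid (u+v) u η; rw [show u + v - u = v by ring] at this; linear_combination this
  have hE : cexp (-u) * cexp (u+v) = cexp v := by rw [← Complex.exp_add]; ring_nf
  simp only [bC, cP, cM]; field_simp
  linear_combination sinh η^2 * sinh v * hE - sinh η * cexp v * hK

lemma YB4 : bC η (u+v) * cM η v = cM η v * bC η u + bC η v * cM η (u+v) * cP η u := by
  have hK : sinh (u+v) * sinh (u + η) = sinh (u+v+η) * sinh u + sinh η * sinh v := by
    have := Kid (u+v) u η; rw [show u + v - u = v by ring] at this; linear_combination this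
  have hE : cexp (-v + -u) * cexp u = cexp (-v) := by rw [← Complex.exp_add]; ring_nf
  simp only [bC, cP, cM]; field_simp
  rw [show -(u+v) = -v + -u by ring]
  linear_combination sinh η * cexp (-v) * hK - sinh η^2 * sinh v * hE

lemma YB5 : bC η u * cP η (u+v) * bC η v + cP η u * cP η v = cP η (u+v) := by
  have hK := Kid2 u v η
  have hE : cexp u * cexp v = cexp (u+v) := by rw [← Complex.exp_add]
  simp only [bC, cP, cM]; field_simp
  linear_combination sinh η^2 * sinh (u+v+η) * hE - sinh η * cexp (u+v) * hK

lemma YB6 : cM η (u+v) = cM η v * cM η u + bC η v * cM η (u+v) * bC η u := by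
  have hK := Kid2 u v η
  have hE : cexp (-v) * cexp (-u) = cexp (-v + -u) := by rw [← Complex.exp_add]
  simp only [bC, cP, cM]; field_simp
  rw [show -(u+v) = -v + -u by ring]
  linear_combination sinh η * cexp (-v + -u) * hK - sinh η^2 * sinh (u+v+η) * hE

lemma YB7 : cM η u * cP η (u+v) * cM η v = cP η v * cM η (u+v) * cP η u := by
  have hE : cexp (-u) * cexp (u+v) * cexp (-v) = cexp v * cexp (-v + -u) * cexp u := by
    rw [← Complex.exp_add, ← Complex.exp_add, ← Complex.exp_add, ← Complex.exp_add]; ring_nf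
  simp only [bC, cP, cM]; field_simp
  rw [show -(u+v) = -v + -u by ring]
  linear_combination sinh η^3 * hE

lemma YB1s : bC η u * cM η (u+v) * cP η v + cM η u * bC η v = bC η (u+v) * cM η u := by
  have hK : sinh (u+v) * sinh (v + η) = sinh (u+v+η) * sinh v + sinh η * sinh u := by
    have := Kid (u+v) v η; rw [show u + v - v = u by ring] at this; linear_combination this
  have hE : cexp (-v + -u) * cexp v = cexp (-u) := by rw [← Complex.exp_add]; ring_nf
  simp only [bC, cP, cM]; field_simp
  rw [show -(u+v) = -v + -u by ring]
  linear_combination sinh η^2 * sinh u * hE - sinh η * cexp (-u) * hK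

lemma YB2s : cP η u * bC η (u+v) = bC η v * cP η u + cM η v * cP η (u+v) * bC η u := by
  have hK : sinh (u+v) * sinh (v + η) = sinh (u+v+η) * sinh v + sinh η * sinh u := by
    have := Kid (u+v) v η; rw [show u + v - v = u by ring] at this; linear_combination this
  have hE : cexp (-v) * cexp (u+v) = cexp u := by rw [← Complex.exp_add]; ring_nf
  simp only [bC, cP, cM]; field_simp
  linear_combination sinh η * cexp u * hK - sinh η^2 * sinh u * hE

lemma YB3s : cP η u * cM η (u+v) * bC η v + bC η u * cM η v = cM η v * bC η (u+v) := by
  have hK : sinh (u+v) * sinh (u + η) = sinh (u+v+η) * sinh u + sinh η * sinh v := by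
    have := Kid (u+v) u η; rw [show u + v - u = v by ring] at this; linear_combination this
  have hE : cexp u * cexp (-v + -u) = cexp (-v) := by rw [← Complex.exp_add]; ring_nf
  simp only [bC, cP, cM]; field_simp
  rw [show -(u+v) = -v + -u by ring]
  linear_combination sinh η^2 * sinh v * hE - sinh η * cexp (-v) * hK

lemma YB4s : bC η (u+v) * cP η v = cP η v * bC η u + bC η v * cP η (u+v) * cM η u := by
  have hK : sinh (u+v) * sinh (u + η) = sinh (u+v+η) * sinh u + sinh η * sinh v := by
    have := Kid (u+v) u η; rw [show u + v - u = v by ring] at this; linear_combination this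
  have hE : cexp (u+v) * cexp (-u) = cexp v := by rw [← Complex.exp_add]; ring_nf
  simp only [bC, cP, cM]; field_simp
  linear_combination sinh η * cexp v * hK - sinh η^2 * sinh v * hE

lemma YB5s : bC η u * cM η (u+v) * bC η v + cM η u * cM η v = cM η (u+v) := by
  have hK := Kid2 u v η
  have hE : cexp (-u) * cexp (-v) = cexp (-v + -u) := by rw [← Complex.exp_add]; ring_nf
  simp only [bC, cP, cM]; field_simp
  rw [show -(u+v) = -v + -u by ring]
  linear_combination sinh η^2 * sinh (u+v+η) * hE - sinh η * cexp (-v + -u) * hK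

lemma YB6s : cP η (u+v) = cP η v * cP η u + bC η v * cP η (u+v) * bC η u := by
  have hK := Kid2 u v η
  have hE : cexp v * cexp u = cexp (u+v) := by rw [← Complex.exp_add]; ring_nf
  simp only [bC, cP, cM]; field_simp
  linear_combination sinh η * cexp (u+v) * hK - sinh η^2 * sinh (u+v+η) * hE

end YB

lemma fin2cases (x : Fin 2) : x = 0 ∨ x = 1 := by omega

set_option maxHeartbeats 4000000 in
/-- Yang–Baxter equation for the asymmetric R-matrices `R^±` on `(ℂ²)^{⊗3}`,
for both choices of sign. -/
theorem statement1 (η lam1 lam2 lam3 : ℂ)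
    (h12 : Complex.sinh (lam1 - lam2 + η) ≠ 0)
    (h13 : Complex.sinh (lam1 - lam3 + η) ≠ 0)
    (h23 : Complex.sinh (lam2 - lam3 + η) ≠ 0) :
    (emb2 3 0 1 (Rplus η (lam1 - lam2)) * emb2 3 0 2 (Rplus η (lam1 - lam3)) *
        emb2 3 1 2 (Rplus η (lam2 - lam3)) =
      emb2 3 1 2 (Rplus η (lam2 - lam3)) * emb2 3 0 2 (Rplus η (lam1 - lam3)) *
        emb2 3 0 1 (Rplus η (lam1 - lam2))) ∧
    (emb2 3 0 1 (Rminus η (lam1 - lam2)) * emb2 3 0 2 (Rminus η (lam1 - lam3)) *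
        emb2 3 1 2 (Rminus η (lam2 - lam3)) =
      emb2 3 1 2 (Rminus η (lam2 - lam3)) * emb2 3 0 2 (Rminus η (lam1 - lam3)) *
        emb2 3 0 1 (Rminus η (lam1 - lam2))) := by
  have e13 : lam1 - lam2 + (lam2 - lam3) = lam1 - lam3 := by ring
  have hw' : Complex.sinh (lam1 - lam2 + (lam2 - lam3) + η) ≠ 0 := by
    rw [show lam1 - lam2 + (lam2 - lam3) + η = lam1 - lam3 + η by ring]; exact h13
  have H1 := YB1 η (lam1 - lam2) (lam2 - lam3) h12 h23 hw'
  have H2 := YB2 η (lam1 - lam2) (lam2 - lam3) h12 h23 hw'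
  have H3 := YB3 η (lam1 - lam2) (lam2 - lam3) h12 h23 hw'
  have H4 := YB4 η (lam1 - lam2) (lam2 - lam3) h12 h23 hw'
  have H5 := YB5 η (lam1 - lam2) (lam2 - lam3) h12 h23 hw'
  have H6 := YB6 η (lam1 - lam2) (lam2 - lam3) h12 h23 hw'
  have H7 := YB7 η (lam1 - lam2) (lam2 - lam3) h12 h23 hw'
  have H1s := YB1s η (lam1 - lam2) (lam2 - lam3) h12 h23 hw'
  have H2s := YB2s η (lam1 - lam2) (lam2 - lam3) h12 h23 hw'
  have H3s := YB3s η (lam1 - lam2) (lam2 - lam3) h12 h23 hw'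
  have H4s := YB4s η (lam1 - lam2) (lam2 - lam3) h12 h23 hw'
  have H5s := YB5s η (lam1 - lam2) (lam2 - lam3) h12 h23 hw'
  have H6s := YB6s η (lam1 - lam2) (lam2 - lam3) h12 h23 hw'
  rw [e13] at H1 H2 H3 H4 H5 H6 H7 H1s H2s H3s H4s H5s H6s
  constructor <;>
  · ext a b
    simp only [Matrix.mul_apply, emb2, Matrix.of_apply, Fin.prod_univ_three]
    simp only [sum8']
    simp only [Matrix.cons_val_zero, Matrix.cons_val_one, Matrix.head_cons, Matrix.cons_val_two,
      Matrix.tail_cons]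
    rcases fin2cases (a 0) with h|h <;> rw [h] <;> clear h <;>
      rcases fin2cases (a 1) with h|h <;> rw [h] <;> clear h <;>
      rcases fin2cases (a 2) with h|h <;> rw [h] <;> clear h <;>
      rcases fin2cases (b 0) with h|h <;> rw [h] <;> clear h <;>
      rcases fin2cases (b 1) with h|h <;> rw [h] <;> clear h <;>
      rcases fin2cases (b 2) with h|h <;> rw [h] <;> clear h <;>
    · simp (config := { decide := true }) only [Rplus, Rminus, Matrix.of_apply, Prod.mk.injEq,
        if_true, if_false, mul_zero, zero_mul, mul_one, one_mul, add_zero, zero_add]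
      all_goals first
        | ring1
        | linear_combination H1 | linear_combination -H1
        | linear_combination H2 | linear_combination -H2
        | linear_combination H3 | linear_combination -H3
        | linear_combination H4 | linear_combination -H4
        | linear_combination H5 | linear_combination -H5
        | linear_combination H6 | linear_combination -H6
        | linear_combination H7 | linear_combination -H7
        | linear_combination H1s | linear_combination -H1s
        | linear_combination H2s | linear_combination -H2s
        | linear_combination H3s | linear_combination -H3s
        | linear_combination H4s | linear_combination -H4s
        | linear_combination H5s | linear_combination -H5s
        | linear_combination H6s | linear_combination -H6s
end
end

section
/- Let 0 ≤ t ≤ n, let J = {j₁ < ⋯ < j_t} and K = {κ₁ < ⋯ < κ_t} be t-element subsets of {1,…,n}, let π be a bijection from {1,…,n}∖J onto {1,…,n}∖K, let τ be a permutation of {1,…,t}, and let ψ be a t×t complex matrix. Define the n×n complex matrix φ by: for j ∉ J, φ_{j,k} = −δ_{π(j),k} for all k; for j = j_r ∈ J, φ_{j,κ_k} = ψ_{τ(r),k} for 1 ≤ k ≤ t and φ_{j,k'} = 0 for k' ∉ K. Then det φ = (−1)^{n−t} · sgn(ρ) · sgn(τ) · det ψ, where ρ is the permutation of {1,…,n}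 defined by ρ(j_r) = κ_r for 1 ≤ r ≤ t and ρ(j) = π(j) for j ∉ J. (This determinant rearrangement, relating the determinant of the matrix φ built from rows that are negative standard basis vectors together with a permuted block ψ to det ψ with an explicit sign, is the content underlying Proposition 6.2.) -/
open Matrix Complex Finset Filter

noncomputable section


/-- Determinant rearrangement underlying Proposition 6.2: the determinant of a
matrix whose rows are either negative standard basis vectors or rows of a
permuted block `ψ` equals `(−1)^{n−t} sgn(ρ) sgn(τ) det ψ`. -/
theorem statement19 (n t : ℕ) (ht : t ≤ n) (J K : Finset (Fin n))
    (hJ : J.card = t) (hK : K.card = t)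
    (π : {x : Fin n // x ∉ J} ≃ {x : Fin n // x ∉ K})
    (τ : Equiv.Perm (Fin t)) (ψ : Matrix (Fin t) (Fin t) ℂ)
    (ρ : Equiv.Perm (Fin n))
    (hρ1 : ∀ rr : Fin t, ρ ((J.orderIsoOfFin hJ rr : {x // x ∈ J}) : Fin n) =
      ((K.orderIsoOfFin hK rr : {x // x ∈ K}) : Fin n))
    (hρ2 : ∀ (j : Fin n) (h : j ∉ J), ρ j = ((π ⟨j, h⟩ : {x // x ∉ K}) : Fin n)) :
    Matrix.det (Matrix.of fun j k : Fin n =>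
      if hj : j ∈ J then
        (if hk : k ∈ K then
          ψ (τ ((J.orderIsoOfFin hJ).symm ⟨j, hj⟩)) ((K.orderIsoOfFin hK).symm ⟨k, hk⟩)
        else 0)
      else -(if ((π ⟨j, hj⟩ : {x // x ∉ K}) : Fin n) = k then (1 : ℂ) else 0)) =
    (-1) ^ (n - t) * ((Equiv.Perm.sign ρ : ℤ) : ℂ) * ((Equiv.Perm.sign τ : ℤ) : ℂ) *
      ψ.det := by
  classical
  set φ : Matrix (Fin n) (Fin n) ℂ := Matrix.of fun j k : Fin n =>
      if hj : j ∈ J then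
        (if hk : k ∈ K then
          ψ (τ ((J.orderIsoOfFin hJ).symm ⟨j, hj⟩)) ((K.orderIsoOfFin hK).symm ⟨k, hk⟩)
        else 0)
      else -(if ((π ⟨j, hj⟩ : {x // x ∉ K}) : Fin n) = k then (1 : ℂ) else 0) with hφ
  -- ρ maps J into K and Jᶜ into Kᶜ
  have hρJ : ∀ (k : Fin n) (hk : k ∈ J), ρ k ∈ K := by
    intro k hk
    have := hρ1 ((J.orderIsoOfFin hJ).symm ⟨k, hk⟩)
    simp at this
    rw [this]
    exact coe_mem _
  have hρJc : ∀ (k : Fin n) (hk : k ∉ J), ρ k ∉ K := by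
    intro k hk
    rw [hρ2 k hk]
    exact (π ⟨k, hk⟩).2
  -- the column-permuted matrix
  let eJ : {x : Fin n // x ∈ J} ≃ Fin t := (J.orderIsoOfFin hJ).symm.toEquiv
  have key : (φ.submatrix id ρ).submatrix (Equiv.sumCompl (· ∈ J)) (Equiv.sumCompl (· ∈ J))
      = Matrix.fromBlocks
          ((ψ.submatrix τ id).submatrix eJ eJ)
          0 0 (-1) := by
    ext j k
    cases j with
    | inl j =>
      cases k with
      | inl k =>
        simp only [Matrix.submatrix_apply, Equiv.sumCompl_apply_inl, id_eq, hφ,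
          Matrix.of_apply, Matrix.fromBlocks_apply₁₁, Matrix.submatrix_apply]
        rw [dif_pos j.2, dif_pos (hρJ k k.2)]
        congr 1
        have h1 := hρ1 ((J.orderIsoOfFin hJ).symm ⟨k.1, k.2⟩)
        simp only [OrderIso.apply_symm_apply] at h1
        rw [OrderIso.symm_apply_eq]
        exact Subtype.ext (by simpa [eJ] using h1)
      | inr k =>
        simp only [Matrix.submatrix_apply, Equiv.sumCompl_apply_inl,
          Equiv.sumCompl_apply_inr, id_eq, hφ, Matrix.of_apply,
          Matrix.fromBlocks_apply₁₂, Matrix.zero_apply]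
        rw [dif_pos j.2, dif_neg (hρJc k k.2)]
    | inr j =>
      cases k with
      | inl k =>
        simp only [Matrix.submatrix_apply, Equiv.sumCompl_apply_inl,
          Equiv.sumCompl_apply_inr, id_eq, hφ, Matrix.of_apply,
          Matrix.fromBlocks_apply₂₁, Matrix.zero_apply]
        rw [dif_neg j.2, if_neg, neg_zero]
        intro h
        exact absurd (h ▸ (hρJ k k.2)) (π ⟨j.1, j.2⟩).2
      | inr k =>
        simp only [Matrix.submatrix_apply, Equiv.sumCompl_apply_inr, id_eq, hφ,
          Matrix.of_apply, Matrix.fromBlocks_apply₂₂, Matrix.neg_apply,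
          Matrix.one_apply]
        rw [dif_neg j.2, hρ2 k.1 k.2]
        congr 1
        by_cases h : j = k
        · subst h; simp
        · rw [if_neg, if_neg h]
          intro hc
          exact h (by
            have : π ⟨j.1, j.2⟩ = π ⟨k.1, k.2⟩ := Subtype.ext hc
            have := π.injective this
            exact Subtype.ext (congrArg Subtype.val this))
  have hdet1 : (φ.submatrix id ρ).det = (Equiv.Perm.sign ρ : ℂ) * φ.det := by
    rw [Matrix.det_permute' ρ φ]
  have hdet2 : (φ.submatrix id ρ).det =
      ((Equiv.Perm.sign τ : ℂ) * ψ.det) * (-1) ^ (n - t) := by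
    rw [← Matrix.det_submatrix_equiv_self (Equiv.sumCompl (· ∈ J)), key,
      Matrix.det_fromBlocks_zero₁₂]
    have hA : ((ψ.submatrix τ id).submatrix eJ eJ).det
        = (Equiv.Perm.sign τ : ℂ) * ψ.det := by
      rw [Matrix.det_submatrix_equiv_self eJ, Matrix.det_permute]
    have hB : (-1 : Matrix {x : Fin n // x ∉ J} {x : Fin n // x ∉ J} ℂ).det
        = (-1) ^ (n - t) := by
      have hc : Fintype.card {x : Fin n // x ∉ J} = n - t := by
        have := Fintype.card_subtype_compl (· ∈ J) (α := Fin n)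
        simpa [hJ] using this
      rw [show (-1 : Matrix {x : Fin n // x ∉ J} {x : Fin n // x ∉ J} ℂ) = -(1 : Matrix _ _ ℂ)
        from rfl, Matrix.det_neg, hc]
      simp
    rw [hA, hB]
  have hsign : (Equiv.Perm.sign ρ : ℂ) * (Equiv.Perm.sign ρ : ℂ) = 1 := by
    rcases Int.units_eq_one_or (Equiv.Perm.sign ρ) with h | h <;> simp [h]
  have : φ.det = (Equiv.Perm.sign ρ : ℂ) * (((Equiv.Perm.sign τ : ℂ) * ψ.det) * (-1) ^ (n - t)) := by
    have := hdet1.symm.trans hdet2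
    calc φ.det = ((Equiv.Perm.sign ρ : ℂ) * (Equiv.Perm.sign ρ : ℂ)) * φ.det := by
          rw [hsign, one_mul]
      _ = (Equiv.Perm.sign ρ : ℂ) * ((Equiv.Perm.sign ρ : ℂ) * φ.det) := by ring
      _ = _ := by rw [← hdet1, hdet2]
  rw [this]
  push_cast
  ring
end
end
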